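/- For every pair of pointed Kripke models (M,w), (N,v), every set Q of generalized modalities, and every d ∈ ℕ, the following are equivalent: (1) Player 2 has a winning strategy in the d-round Q-bisimulation game on (M,w) and (N,v); (2) (M,w) and (N,v) satisfy the same PL(Q)-formulas of modal depth at most d; (3) N,v satisfies the canonical Q-characteristic depth-d formula of w computed in the disjoint union M⊔N. -/
import Mathlib


/-- A Kripke model over proposition symbols `P` with node set `V`. -/
structure Kripke (P V : Type) where
  succ : V → Finset V
  label : V → P → Prop

/-- Formulas of `PL(𝒬)`: propositional logic extended with generalized modalities
indexed by `ι`. -/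
inductive PLQ (P ι : Type) : Type
  | bot : PLQ P ι
  | prop : P → PLQ P ι
  | neg : PLQ P ι → PLQ P ι
  | and : PLQ P ι → PLQ P ι → PLQ P ι
  | or : PLQ P ι → PLQ P ι → PLQ P ι
  | app : ι → PLQ P ι → PLQ P ι

/-- Modal depth of a `PL(𝒬)` formula. -/
def PLQ.md {P ι : Type} : PLQ P ι → ℕ
  | .bot => 0
  | .prop _ => 0
  | .neg φ => φ.md
  | .and φ ψ => max φ.md ψ.md
  | .or φ ψ => max φ.md ψ.md
  | .app _ φ => φ.md + 1

/-- Satisfaction of `PL(𝒬)` formulas. A generalized quantifier is an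
isomorphism-closed class of structures `(D, P)` with `P ⊆ D`, so it is determined by
the pair of cardinalities `(|D|, |P|)`; accordingly the family `𝒬` is given as
`Q : ι → ℕ → ℕ → Prop`, and `M,v ⊨ ⟨Q i⟩φ` iff
`(N(v), {u ∈ N(v) : M,u ⊨ φ}) ∈ Q i`, i.e. `Q i |N(v)| |{u ∈ N(v) : M,u ⊨ φ}|`. -/
def Kripke.SatQ {P V ι : Type} (M : Kripke P V) (Q : ι → ℕ → ℕ → Prop) :
    PLQ P ι → V → Prop
  | .bot, _ => False
  | .prop p, v => M.label v p
  | .neg φ, v => ¬ M.SatQ Q φ v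
  | .and φ ψ, v => M.SatQ Q φ v ∧ M.SatQ Q ψ v
  | .or φ ψ, v => M.SatQ Q φ v ∨ M.SatQ Q ψ v
  | .app i φ, v => Q i (M.succ v).card {u | u ∈ M.succ v ∧ M.SatQ Q φ u}.ncard

/-- Disjoint union `M ⊔ N` of two Kripke models. -/
def Kripke.sum {P V W : Type} (M : Kripke P V) (N : Kripke P W) : Kripke P (V ⊕ W) where
  succ := fun x => match x with
    | .inl a => (M.succ a).map ⟨Sum.inl, Sum.inl_injective⟩
    | .inr b => (N.succ b).map ⟨Sum.inr, Sum.inr_injective⟩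
  label := fun x p => match x with
    | .inl a => M.label a p
    | .inr b => N.label b p

/-- `AttWin K Q d a b` : the player currently in the attacker role has a winning
strategy in the `d`-round `𝒬`-bisimulation game from position `(a, b)` (both pebbles on
nodes of the single model `K`, e.g. a disjoint union). The attacker wins immediately if
the pebbled nodes disagree on a proposition symbol; otherwise the attacker selects a
pebble `u` (the other being `v`), a modality `⟨Q i⟩`, a set `X ⊆ N(u)` with
`(N(u),X) ∈ Q i`, and a set `P' ⊆ N(v)`; the defender may contest `X` or `P'`
(moving the pebbles as prescribed), or reply with `X' ⊆ N(v)` with `(N(v),X') ∈ Q i`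
and `P' ⊆ X'`, after which the attacker may contest `X'` (becoming the defender), move
to `N(v) \ X'` × `X` (becoming the defender), or move one pebble into `X'` with the
defender answering in `X ∪ P'`. (By determinacy of this finite game, the defender,
i.e. Player 2, has a winning strategy iff `AttWin` fails.) -/
def AttWin {P V ι : Type} [DecidableEq V] (K : Kripke P V) (Q : ι → ℕ → ℕ → Prop) :
    ℕ → V → V → Prop
  | 0, a, b => ¬ ∀ p, K.label a p ↔ K.label b p
  | (d+1), a, b => (¬ ∀ p, K.label a p ↔ K.label b p) ∨
      ∃ u v : V, ((u, v) = (a, b) ∨ (u, v) = (b, a)) ∧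
      ∃ (i : ι) (X P' : Finset V), X ⊆ K.succ u ∧ Q i (K.succ u).card X.card ∧
        P' ⊆ K.succ v ∧
        (∀ x ∈ X, ∀ y ∈ K.succ u \ X, AttWin K Q d x y) ∧
        (∀ y ∈ P', ∀ x ∈ K.succ u, AttWin K Q d x y) ∧
        (∀ X' : Finset V, X' ⊆ K.succ v → Q i (K.succ v).card X'.card → P' ⊆ X' →
          (∃ y ∈ X', ∃ z ∈ K.succ v \ X', ¬ AttWin K Q d y z) ∨
          (∃ y ∈ K.succ v \ X', ∃ x ∈ X, ¬ AttWin K Q d x y) ∨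
          (∃ y ∈ X', ∀ x, (x ∈ X ∨ x ∈ P') → AttWin K Q d x y))

/-- `Player 2 (the defender) has a winning strategy in the `d`-round `𝒬`-bisimulation
game from position `(a,b)` (via determinacy of the finite game). -/
def DefWin {P V ι : Type} [DecidableEq V] (K : Kripke P V) (Q : ι → ℕ → ℕ → Prop)
    (d : ℕ) (a b : V) : Prop := ¬ AttWin K Q d a b

/-- `CharSat K Q d w v` : `v` satisfies the canonical `𝒬`-characteristic depth-`d`
formula `φ^{𝒬,d}_{K,w}` of `w`. At depth 0 this is the full propositional agreement
with `w`; at depth `d+1` it additionally requires, for every modality `⟨Q i⟩` and every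
set `C` of depth-`d` characteristic formulas of nodes of `K` (encoded by the set `S` of
nodes whose characteristic formulas constitute `C`, so that a node `u` satisfies `⋁C`
iff `∃ x ∈ S, CharSat K Q d x u`), that `⟨Q i⟩(⋁C)` holds at `v` iff it holds at `w`. -/
def CharSat {P V ι : Type} (K : Kripke P V) (Q : ι → ℕ → ℕ → Prop) :
    ℕ → V → V → Prop
  | 0, w, v => ∀ p, K.label w p ↔ K.label v p
  | (d+1), w, v => (∀ p, K.label w p ↔ K.label v p) ∧
      ∀ (i : ι) (S : Set V),
        (Q i (K.succ w).card
            {u | u ∈ K.succ w ∧ ∃ x ∈ S, CharSat K Q d x u}.ncard ↔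
         Q i (K.succ v).card
            {u | u ∈ K.succ v ∧ ∃ x ∈ S, CharSat K Q d x u}.ncard)

namespace GameProof

attribute [local instance] Classical.propDecidable

variable {P V ι : Type}

/-- Depth-`d` elementary equivalence. -/
def EqF (K : Kripke P V) (Q : ι → ℕ → ℕ → Prop) (d : ℕ) (a b : V) : Prop :=
  ∀ φ : PLQ P ι, φ.md ≤ d → (K.SatQ Q φ a ↔ K.SatQ Q φ b)

lemma EqF.refl (K : Kripke P V) (Q : ι → ℕ → ℕ → Prop) (d : ℕ) (a : V) :
    EqF K Q d a a := fun _ _ => Iff.rfl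

lemma EqF.symm {K : Kripke P V} {Q : ι → ℕ → ℕ → Prop} {d : ℕ} {a b : V}
    (h : EqF K Q d a b) : EqF K Q d b a := fun φ hφ => (h φ hφ).symm

lemma EqF.trans {K : Kripke P V} {Q : ι → ℕ → ℕ → Prop} {d : ℕ} {a b c : V}
    (h : EqF K Q d a b) (h' : EqF K Q d b c) : EqF K Q d a c :=
  fun φ hφ => (h φ hφ).trans (h' φ hφ)

def bigOr : List (PLQ P ι) → PLQ P ι
  | [] => .bot
  | φ :: l => .or φ (bigOr l)

def bigAnd : List (PLQ P ι) → PLQ P ι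
  | [] => .neg .bot
  | φ :: l => .and φ (bigAnd l)

lemma md_bigOr {d : ℕ} {l : List (PLQ P ι)} (h : ∀ φ ∈ l, φ.md ≤ d) :
    (bigOr l).md ≤ d := by
  induction l with
  | nil => simp [bigOr, PLQ.md]
  | cons φ l ih =>
    simp only [bigOr, PLQ.md, max_le_iff]
    exact ⟨h φ (by simp), ih fun ψ hψ => h ψ (by simp [hψ])⟩

lemma md_bigAnd {d : ℕ} {l : List (PLQ P ι)} (h : ∀ φ ∈ l, φ.md ≤ d) :
    (bigAnd l).md ≤ d := by
  induction l with
  | nil => simp [bigAnd, PLQ.md]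
  | cons φ l ih =>
    simp only [bigAnd, PLQ.md, max_le_iff]
    exact ⟨h φ (by simp), ih fun ψ hψ => h ψ (by simp [hψ])⟩

lemma sat_bigOr (K : Kripke P V) (Q : ι → ℕ → ℕ → Prop) (l : List (PLQ P ι)) (u : V) :
    K.SatQ Q (bigOr l) u ↔ ∃ φ ∈ l, K.SatQ Q φ u := by
  induction l with
  | nil => simp [bigOr, Kripke.SatQ]
  | cons φ l ih => simp [bigOr, Kripke.SatQ, ih]

lemma sat_bigAnd (K : Kripke P V) (Q : ι → ℕ → ℕ → Prop) (l : List (PLQ P ι)) (u : V) :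
    K.SatQ Q (bigAnd l) u ↔ ∀ φ ∈ l, K.SatQ Q φ u := by
  induction l with
  | nil => simp [bigAnd, Kripke.SatQ]
  | cons φ l ih => simp [bigAnd, Kripke.SatQ, ih]

lemma exists_sep {K : Kripke P V} {Q : ι → ℕ → ℕ → Prop} {d : ℕ} {x y : V}
    (h : ¬ EqF K Q d x y) :
    ∃ φ : PLQ P ι, φ.md ≤ d ∧ K.SatQ Q φ x ∧ ¬ K.SatQ Q φ y := by
  unfold EqF at h
  push_neg at h
  obtain ⟨φ, hmd, hne⟩ := h
  rcases hne with ⟨hx, hy⟩ | ⟨hx, hy⟩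
  · exact ⟨φ, hmd, hx, hy⟩
  · exact ⟨.neg φ, hmd, hx, fun h' => h' hy⟩

/-- Characteristic formula for the union of the `EqF d`-classes of elements of `S`. -/
lemma exists_charForm [Fintype V] (K : Kripke P V) (Q : ι → ℕ → ℕ → Prop)
    (d : ℕ) (S : Set V) :
    ∃ ψ : PLQ P ι, ψ.md ≤ d ∧ ∀ u, (K.SatQ Q ψ u ↔ ∃ x ∈ S, EqF K Q d x u) := by
  have hsep : ∀ x y : V, ∃ φ : PLQ P ι,
      ¬ EqF K Q d x y → (φ.md ≤ d ∧ K.SatQ Q φ x ∧ ¬ K.SatQ Q φ y) := by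
    intro x y
    by_cases h : EqF K Q d x y
    · exact ⟨.bot, fun h' => absurd h h'⟩
    · obtain ⟨φ, h1, h2, h3⟩ := exists_sep h
      exact ⟨φ, fun _ => ⟨h1, h2, h3⟩⟩
  choose f hf using hsep
  set χ : V → PLQ P ι := fun x =>
    bigAnd (((Finset.univ.filter (fun y => ¬ EqF K Q d x y)).toList).map (f x)) with hχ
  have hχsat : ∀ x u, K.SatQ Q (χ x) u ↔ EqF K Q d x u := by
    intro x u
    rw [hχ, sat_bigAnd]
    constructor
    · intro hall
      by_contra hne
      have hmem : f x u ∈ ((Finset.univ.filter (fun y => ¬ EqF K Q d x y)).toList).map (f x) := by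
        apply List.mem_map_of_mem
        rw [Finset.mem_toList, Finset.mem_filter]
        exact ⟨Finset.mem_univ _, hne⟩
      exact (hf x u hne).2.2 (hall _ hmem)
    · intro heq φ hφ
      obtain ⟨y, hy, rfl⟩ := List.mem_map.mp hφ
      rw [Finset.mem_toList, Finset.mem_filter] at hy
      have hy' := hf x y hy.2
      exact (heq (f x y) hy'.1).mp hy'.2.1
  have hχmd : ∀ x, (χ x).md ≤ d := by
    intro x
    apply md_bigAnd
    intro φ hφ
    obtain ⟨y, hy, rfl⟩ := List.mem_map.mp hφ
    rw [Finset.mem_toList, Finset.mem_filter] at hy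
    exact (hf x y hy.2).1
  refine ⟨bigOr (((Finset.univ.filter (fun x => x ∈ S)).toList).map χ), ?_, ?_⟩
  · apply md_bigOr
    intro φ hφ
    obtain ⟨y, _, rfl⟩ := List.mem_map.mp hφ
    exact hχmd y
  · intro u
    rw [sat_bigOr]
    constructor
    · rintro ⟨φ, hφ, hsat⟩
      obtain ⟨x, hx, rfl⟩ := List.mem_map.mp hφ
      rw [Finset.mem_toList, Finset.mem_filter] at hx
      exact ⟨x, hx.2, (hχsat x u).mp hsat⟩
    · rintro ⟨x, hxS, heq⟩
      refine ⟨χ x, ?_, (hχsat x u).mpr heq⟩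
      apply List.mem_map_of_mem
      rw [Finset.mem_toList, Finset.mem_filter]
      exact ⟨Finset.mem_univ _, hxS⟩

lemma eqF_zero {K : Kripke P V} {Q : ι → ℕ → ℕ → Prop} {a b : V} :
    EqF K Q 0 a b ↔ ∀ p, K.label a p ↔ K.label b p := by
  constructor
  · intro h p
    exact h (.prop p) (le_refl _)
  · intro h φ hmd
    induction φ with
    | bot => exact Iff.rfl
    | prop p => exact h p
    | neg φ ih =>
      show ¬ _ ↔ ¬ _
      rw [ih hmd]
    | and φ ψ ih ih' =>
      simp only [PLQ.md, max_le_iff] at hmd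
      show _ ∧ _ ↔ _ ∧ _
      rw [ih hmd.1, ih' hmd.2]
    | or φ ψ ih ih' =>
      simp only [PLQ.md, max_le_iff] at hmd
      show _ ∨ _ ↔ _ ∨ _
      rw [ih hmd.1, ih' hmd.2]
    | app i φ ih => exact absurd hmd (by simp [PLQ.md])

lemma eqF_succ {K : Kripke P V} {Q : ι → ℕ → ℕ → Prop} {d : ℕ} {a b : V} :
    EqF K Q (d+1) a b ↔ ((∀ p, K.label a p ↔ K.label b p) ∧
      ∀ (i : ι) (ψ : PLQ P ι), ψ.md ≤ d →
        (K.SatQ Q (.app i ψ) a ↔ K.SatQ Q (.app i ψ) b)) := by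
  constructor
  · intro h
    refine ⟨fun p => h (.prop p) (by simp [PLQ.md]), fun i ψ hmd => ?_⟩
    exact h (.app i ψ) (by simp only [PLQ.md]; omega)
  · rintro ⟨hlab, happ⟩ φ hmd
    induction φ with
    | bot => exact Iff.rfl
    | prop p => exact hlab p
    | neg φ ih =>
      show ¬ _ ↔ ¬ _
      rw [ih hmd]
    | and φ ψ ih ih' =>
      simp only [PLQ.md, max_le_iff] at hmd
      show _ ∧ _ ↔ _ ∧ _
      rw [ih hmd.1, ih' hmd.2]
    | or φ ψ ih ih' =>
      simp only [PLQ.md, max_le_iff] at hmd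
      show _ ∨ _ ↔ _ ∨ _
      rw [ih hmd.1, ih' hmd.2]
    | app i φ ih =>
      simp only [PLQ.md] at hmd
      exact happ i φ (by omega)



lemma ncard_sep (s : Finset V) (p : V → Prop) :
    {z | z ∈ s ∧ p z}.ncard = (s.filter p).card := by
  rw [← Set.ncard_coe_finset]
  congr 1
  ext z
  simp [Finset.mem_filter]

lemma attack_body [DecidableEq V] {K : Kripke P V} {Q : ι → ℕ → ℕ → Prop} {d : ℕ}
    (ih : ∀ a b : V, AttWin K Q d a b ↔ ¬ EqF K Q d a b)
    {u v : V} {i : ι} {ψ : PLQ P ι} (hmd : ψ.md ≤ d)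
    (hu : K.SatQ Q (.app i ψ) u) (hv : ¬ K.SatQ Q (.app i ψ) v) :
    ∃ (X P' : Finset V), X ⊆ K.succ u ∧ Q i (K.succ u).card X.card ∧
        P' ⊆ K.succ v ∧
        (∀ x ∈ X, ∀ y ∈ K.succ u \ X, AttWin K Q d x y) ∧
        (∀ y ∈ P', ∀ x ∈ K.succ u, AttWin K Q d x y) ∧
        (∀ X' : Finset V, X' ⊆ K.succ v → Q i (K.succ v).card X'.card → P' ⊆ X' →
          (∃ y ∈ X', ∃ z ∈ K.succ v \ X', ¬ AttWin K Q d y z) ∨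
          (∃ y ∈ K.succ v \ X', ∃ x ∈ X, ¬ AttWin K Q d x y) ∨
          (∃ y ∈ X', ∀ x, (x ∈ X ∨ x ∈ P') → AttWin K Q d x y)) := by
  have hu' : Q i (K.succ u).card {z | z ∈ K.succ u ∧ K.SatQ Q ψ z}.ncard := hu
  have hv' : ¬ Q i (K.succ v).card {z | z ∈ K.succ v ∧ K.SatQ Q ψ z}.ncard := hv
  rw [ncard_sep] at hu' hv'
  refine ⟨(K.succ u).filter (fun z => K.SatQ Q ψ z),
    (K.succ v).filter (fun y => K.SatQ Q ψ y ∧ ∀ x ∈ K.succ u, ¬ EqF K Q d x y),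
    Finset.filter_subset _ _, hu', Finset.filter_subset _ _, ?_, ?_, ?_⟩
  · intro x hx y hy
    rw [Finset.mem_filter] at hx
    rw [Finset.mem_sdiff] at hy
    rw [ih]
    intro hEq
    exact hy.2 (Finset.mem_filter.mpr ⟨hy.1, (hEq ψ hmd).mp hx.2⟩)
  · intro y hy x hx
    rw [Finset.mem_filter] at hy
    rw [ih]
    exact hy.2.2 x hx
  · intro X' hsub hQ' hP'
    by_contra hcon
    push_neg at hcon
    obtain ⟨h1, h2, h3⟩ := hcon
    have hX'eq : X' = (K.succ v).filter (fun z => K.SatQ Q ψ z) := by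
      apply Finset.ext
      intro y
      constructor
      · intro hy
        obtain ⟨x, hx, hnA⟩ := h3 y hy
        have hEq : EqF K Q d x y := by
          by_contra hne
          exact hnA ((ih x y).mpr hne)
        have hsatx : K.SatQ Q ψ x := by
          rcases hx with hx | hx
          · exact (Finset.mem_filter.mp hx).2
          · exact (Finset.mem_filter.mp hx).2.1
        exact Finset.mem_filter.mpr ⟨hsub hy, (hEq ψ hmd).mp hsatx⟩
      · intro hy
        rw [Finset.mem_filter] at hy
        obtain ⟨hyv, hyψ⟩ := hy
        by_contra hy'
        have hno : ∀ x ∈ K.succ u, ¬ EqF K Q d x y := by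
          intro x hx hEq
          have hsatx : K.SatQ Q ψ x := (hEq ψ hmd).mpr hyψ
          have := h2 y (Finset.mem_sdiff.mpr ⟨hyv, hy'⟩) x (Finset.mem_filter.mpr ⟨hx, hsatx⟩)
          exact (ih x y).mp this hEq
        exact hy' (hP' (Finset.mem_filter.mpr ⟨hyv, hyψ, hno⟩))
    rw [hX'eq] at hQ'
    exact hv' hQ'

lemma attwin_iff [Fintype V] [DecidableEq V] (K : Kripke P V) (Q : ι → ℕ → ℕ → Prop) :
    ∀ (d : ℕ) (a b : V), AttWin K Q d a b ↔ ¬ EqF K Q d a b := by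
  intro d
  induction d with
  | zero =>
    intro a b
    rw [eqF_zero]
    exact Iff.rfl
  | succ d ih =>
    intro a b
    simp only [AttWin]
    constructor
    · rintro (hlab | ⟨u, v, hor, i, X, P', hX, hQ, hP, h1, h2, h3⟩) heq
      · exact hlab fun p => heq (.prop p) (Nat.zero_le _)
      · have huv : EqF K Q (d+1) u v := by
          rcases hor with h | h <;> rw [Prod.mk.injEq] at h <;> obtain ⟨rfl, rfl⟩ := h
          · exact heq
          · exact heq.symm
        obtain ⟨θ, hmdθ, hθ⟩ := exists_charForm K Q d {x | x ∈ X ∨ x ∈ P'}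
        set X' : Finset V :=
          (K.succ v).filter (fun y => ∃ x, (x ∈ X ∨ x ∈ P') ∧ EqF K Q d x y) with hX'def
        have hsetv : {z | z ∈ K.succ v ∧ K.SatQ Q θ z} = (↑X' : Set V) := by
          ext z
          simp only [Set.mem_setOf_eq, hX'def, Finset.coe_filter, hθ, Set.mem_setOf_eq]
        have hsetu : {z | z ∈ K.succ u ∧ K.SatQ Q θ z} = (↑X : Set V) := by
          ext z
          simp only [Set.mem_setOf_eq, Finset.mem_coe, hθ]
          constructor
          · rintro ⟨hz, x, hx, hEq⟩
            rcases hx with hx | hx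
            · by_contra hzX
              exact (ih x z).mp (h1 x hx z (Finset.mem_sdiff.mpr ⟨hz, hzX⟩)) hEq
            · exact absurd hEq.symm ((ih z x).mp (h2 x hx z hz))
          · intro hz
            exact ⟨hX hz, z, Or.inl hz, EqF.refl K Q d z⟩
        have happ' : Q i (K.succ u).card {z | z ∈ K.succ u ∧ K.SatQ Q θ z}.ncard ↔
            Q i (K.succ v).card {z | z ∈ K.succ v ∧ K.SatQ Q θ z}.ncard :=
          huv (.app i θ) (by simp only [PLQ.md]; omega)
        rw [hsetu, hsetv, Set.ncard_coe_finset, Set.ncard_coe_finset] at happ'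
        have hQ' : Q i (K.succ v).card X'.card := happ'.mp hQ
        have hPX' : P' ⊆ X' := by
          intro y hy
          rw [hX'def, Finset.mem_filter]
          exact ⟨hP hy, y, Or.inr hy, EqF.refl K Q d y⟩
        rcases h3 X' (Finset.filter_subset _ _) hQ' hPX' with
          ⟨y, hy, z, hz, hn⟩ | ⟨y, hy, x, hx, hn⟩ | ⟨y, hy, hall⟩
        · have hEq : EqF K Q d y z := by
            by_contra hne
            exact hn ((ih y z).mpr hne)
          rw [hX'def, Finset.mem_filter] at hy
          obtain ⟨_, x, hx, hxy⟩ := hy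
          rw [Finset.mem_sdiff] at hz
          exact hz.2 (by rw [hX'def, Finset.mem_filter]; exact ⟨hz.1, x, hx, hxy.trans hEq⟩)
        · have hEq : EqF K Q d x y := by
            by_contra hne
            exact hn ((ih x y).mpr hne)
          rw [Finset.mem_sdiff] at hy
          exact hy.2 (by rw [hX'def, Finset.mem_filter]; exact ⟨hy.1, x, Or.inl hx, hEq⟩)
        · rw [hX'def, Finset.mem_filter] at hy
          obtain ⟨_, x, hx, hxy⟩ := hy
          exact (ih x y).mp (hall x hx) hxy
    · intro hne
      by_cases hlab : ∀ p, K.label a p ↔ K.label b p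
      · right
        have hB : ¬ ∀ (i : ι) (ψ : PLQ P ι), ψ.md ≤ d →
            (K.SatQ Q (.app i ψ) a ↔ K.SatQ Q (.app i ψ) b) :=
          fun hB => hne (eqF_succ.mpr ⟨hlab, hB⟩)
        push_neg at hB
        obtain ⟨i, ψ, hmd, hne'⟩ := hB
        rcases hne' with ⟨ha, hb⟩ | ⟨ha, hb⟩
        · obtain ⟨X, P', hs⟩ := attack_body ih hmd ha hb
          exact ⟨a, b, Or.inl rfl, i, X, P', hs⟩
        · obtain ⟨X, P', hs⟩ := attack_body ih hmd hb ha
          exact ⟨b, a, Or.inr rfl, i, X, P', hs⟩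
      · exact Or.inl hlab


lemma charSat_iff [Fintype V] (K : Kripke P V) (Q : ι → ℕ → ℕ → Prop) :
    ∀ (d : ℕ) (w v : V), CharSat K Q d w v ↔ EqF K Q d w v := by
  intro d
  induction d with
  | zero =>
    intro w v
    rw [eqF_zero]
    exact Iff.rfl
  | succ d ih =>
    intro w v
    simp only [CharSat]
    constructor
    · rintro ⟨hlab, hmods⟩
      rw [eqF_succ]
      refine ⟨hlab, fun i ψ hmd => ?_⟩
      have hset : ∀ z : V, {u | u ∈ K.succ z ∧ ∃ x ∈ {x | K.SatQ Q ψ x}, CharSat K Q d x u}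
          = {u | u ∈ K.succ z ∧ K.SatQ Q ψ u} := by
        intro z
        ext u
        simp only [Set.mem_setOf_eq]
        constructor
        · rintro ⟨hu, x, hx, hc⟩
          exact ⟨hu, (((ih x u).mp hc) ψ hmd).mp hx⟩
        · rintro ⟨hu, hψ⟩
          exact ⟨hu, u, hψ, (ih u u).mpr (EqF.refl K Q d u)⟩
      have hm := hmods i {x | K.SatQ Q ψ x}
      rw [hset w, hset v] at hm
      exact hm
    · intro h
      refine ⟨fun p => h (.prop p) (Nat.zero_le _), fun i S => ?_⟩
      obtain ⟨θ, hmdθ, hθ⟩ := exists_charForm K Q d S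
      have hset : ∀ z : V, {u | u ∈ K.succ z ∧ ∃ x ∈ S, CharSat K Q d x u}
          = {u | u ∈ K.succ z ∧ K.SatQ Q θ u} := by
        intro z
        ext u
        simp only [Set.mem_setOf_eq, hθ]
        constructor
        · rintro ⟨hu, x, hx, hc⟩
          exact ⟨hu, x, hx, (ih x u).mp hc⟩
        · rintro ⟨hu, x, hx, he⟩
          exact ⟨hu, x, hx, (ih x u).mpr he⟩
      rw [hset w, hset v]
      exact h (.app i θ) (by simp only [PLQ.md]; omega)

lemma satQ_inl {W : Type} (M : Kripke P V) (N : Kripke P W) (Q : ι → ℕ → ℕ → Prop) :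
    ∀ (φ : PLQ P ι) (w : V), (M.sum N).SatQ Q φ (Sum.inl w) ↔ M.SatQ Q φ w := by
  intro φ
  induction φ with
  | bot => intro w; exact Iff.rfl
  | prop p => intro w; exact Iff.rfl
  | neg φ ih => intro w; exact not_congr (ih w)
  | and φ ψ ih ih' => intro w; exact and_congr (ih w) (ih' w)
  | or φ ψ ih ih' => intro w; exact or_congr (ih w) (ih' w)
  | app i φ ih =>
    intro w
    show Q i ((M.sum N).succ (Sum.inl w)).card
        {u | u ∈ (M.sum N).succ (Sum.inl w) ∧ (M.sum N).SatQ Q φ u}.ncard ↔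
      Q i (M.succ w).card {x | x ∈ M.succ w ∧ M.SatQ Q φ x}.ncard
    have hsucc : (M.sum N).succ (Sum.inl w) = (M.succ w).map ⟨Sum.inl, Sum.inl_injective⟩ := rfl
    have hset : {u | u ∈ (M.sum N).succ (Sum.inl w) ∧ (M.sum N).SatQ Q φ u}
        = Sum.inl '' {x | x ∈ M.succ w ∧ M.SatQ Q φ x} := by
      ext u
      cases u with
      | inl a =>
        simp only [hsucc, Set.mem_setOf_eq, Set.mem_image, Finset.mem_map,
          Function.Embedding.coeFn_mk]
        constructor
        · rintro ⟨⟨x, hx, hxa⟩, hsat⟩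
          obtain rfl := Sum.inl_injective hxa
          exact ⟨x, ⟨hx, (ih x).mp hsat⟩, rfl⟩
        · rintro ⟨x, ⟨hx, hsat⟩, hxa⟩
          obtain rfl := Sum.inl_injective hxa
          exact ⟨⟨x, hx, rfl⟩, (ih x).mpr hsat⟩
      | inr b =>
        simp only [hsucc, Set.mem_setOf_eq, Set.mem_image, Finset.mem_map,
          Function.Embedding.coeFn_mk]
        constructor
        · rintro ⟨⟨x, hx, hxa⟩, hsat⟩
          exact absurd hxa (by simp)
        · rintro ⟨x, hx, hxa⟩
          exact absurd hxa (by simp)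
    rw [hset, hsucc, Finset.card_map, Set.ncard_image_of_injective _ Sum.inl_injective]

lemma satQ_inr {W : Type} (M : Kripke P V) (N : Kripke P W) (Q : ι → ℕ → ℕ → Prop) :
    ∀ (φ : PLQ P ι) (v : W), (M.sum N).SatQ Q φ (Sum.inr v) ↔ N.SatQ Q φ v := by
  intro φ
  induction φ with
  | bot => intro v; exact Iff.rfl
  | prop p => intro v; exact Iff.rfl
  | neg φ ih => intro v; exact not_congr (ih v)
  | and φ ψ ih ih' => intro v; exact and_congr (ih v) (ih' v)
  | or φ ψ ih ih' => intro v; exact or_congr (ih v) (ih' v)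
  | app i φ ih =>
    intro v
    show Q i ((M.sum N).succ (Sum.inr v)).card
        {u | u ∈ (M.sum N).succ (Sum.inr v) ∧ (M.sum N).SatQ Q φ u}.ncard ↔
      Q i (N.succ v).card {x | x ∈ N.succ v ∧ N.SatQ Q φ x}.ncard
    have hsucc : (M.sum N).succ (Sum.inr v) = (N.succ v).map ⟨Sum.inr, Sum.inr_injective⟩ := rfl
    have hset : {u | u ∈ (M.sum N).succ (Sum.inr v) ∧ (M.sum N).SatQ Q φ u}
        = Sum.inr '' {x | x ∈ N.succ v ∧ N.SatQ Q φ x} := by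
      ext u
      cases u with
      | inl a =>
        simp only [hsucc, Set.mem_setOf_eq, Set.mem_image, Finset.mem_map,
          Function.Embedding.coeFn_mk]
        constructor
        · rintro ⟨⟨x, hx, hxa⟩, hsat⟩
          exact absurd hxa (by simp)
        · rintro ⟨x, hx, hxa⟩
          exact absurd hxa (by simp)
      | inr b =>
        simp only [hsucc, Set.mem_setOf_eq, Set.mem_image, Finset.mem_map,
          Function.Embedding.coeFn_mk]
        constructor
        · rintro ⟨⟨x, hx, hxa⟩, hsat⟩
          obtain rfl := Sum.inr_injective hxa
          exact ⟨x, ⟨hx, (ih x).mp hsat⟩, rfl⟩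
        · rintro ⟨x, ⟨hx, hsat⟩, hxa⟩
          obtain rfl := Sum.inr_injective hxa
          exact ⟨⟨x, hx, rfl⟩, (ih x).mpr hsat⟩
    rw [hset, hsucc, Finset.card_map, Set.ncard_image_of_injective _ Sum.inr_injective]

end GameProof
/-- for all pointed Kripke models `(M,w)`, `(N,v)`, every family `𝒬` of
generalized modalities and every `d`, the following are equivalent: (1) Player 2 has a
winning strategy in the `d`-round `𝒬`-bisimulation game; (2) `(M,w)` and `(N,v)`
satisfy the same `PL(𝒬)` formulas of modal depth at most `d`; (3) `N,v` satisfies the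
canonical `𝒬`-characteristic depth-`d` formula of `w` computed in `M ⊔ N`. -/
theorem game_formulas_charSat_tfae
    {P V W ι : Type} [Fintype V] [Fintype W] [DecidableEq V] [DecidableEq W]
    (M : Kripke P V) (N : Kripke P W) (Q : ι → ℕ → ℕ → Prop) (w : V) (v : W) (d : ℕ) :
    (DefWin (M.sum N) Q d (Sum.inl w) (Sum.inr v) ↔
      ∀ φ : PLQ P ι, φ.md ≤ d → (M.SatQ Q φ w ↔ N.SatQ Q φ v)) ∧
    ((∀ φ : PLQ P ι, φ.md ≤ d → (M.SatQ Q φ w ↔ N.SatQ Q φ v)) ↔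
      CharSat (M.sum N) Q d (Sum.inl w) (Sum.inr v)) := by
  have key : GameProof.EqF (M.sum N) Q d (Sum.inl w) (Sum.inr v) ↔
      ∀ φ : PLQ P ι, φ.md ≤ d → (M.SatQ Q φ w ↔ N.SatQ Q φ v) := by
    constructor
    · intro h φ hmd
      rw [← GameProof.satQ_inl M N Q φ w, ← GameProof.satQ_inr M N Q φ v]
      exact h φ hmd
    · intro h φ hmd
      rw [GameProof.satQ_inl M N Q φ w, GameProof.satQ_inr M N Q φ v]
      exact h φ hmd
  constructor
  · rw [← key]
    unfold DefWin
    rw [GameProof.attwin_iff (M.sum N) Q d, not_not]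
  · rw [← key, GameProof.charSat_iff (M.sum N) Q d]
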